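/- Let a, b, c : ℝ × ℝ → ℝ be continuous functions of (x, t). Suppose P : ℝ × ℝ → ℝ is continuously differentiable with P > 0, Pₓ(x,t) = 2·a(x,t)·P(x,t) and P_t(x,t) = b(x,t)·P(x,t) for all (x,t); let Q : ℝ × ℝ → ℝ be any continuously differentiable function, and let R : ℝ × ℝ → ℝ be differentiable in x with Rₓ(x,t) = Q_t(x,t) − c(x,t)·P(x,t). Then a twice differentiable curve x : ℝ → ℝ satisfies the Euler–Lagrange equation of the standard Lagrangian L(x, v, t) = (1/2)·P(x,t)·v² + Q(x,t)·v + R(x,t) if and only if x''(t) + a(x(t),t)·x'(t)² + b(x(t),t)·x'(t) + c(x(t),t) = 0 for all t ∈ ℝ. (This is the constructive content of the condition bₓ = 2a_t for the existence of a standard Lagrangian.) -/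

import Mathlib

/-- Partial derivative of the Lagrangian `L x v t` in the velocity argument. -/
noncomputable def pv (L : ℝ → ℝ → ℝ → ℝ) (x v t : ℝ) : ℝ := deriv (fun w => L x w t) v

/-- Partial derivative of the Lagrangian `L x v t` in the position argument. -/
noncomputable def px (L : ℝ → ℝ → ℝ → ℝ) (x v t : ℝ) : ℝ := deriv (fun y => L y v t) x

/-- A curve `x` satisfies the Euler–Lagrange equation of `L`:
`(d/dt)[(∂L/∂v)(x t, x' t, t)] = (∂L/∂x)(x t, x' t, t)` for all `t`. -/
def SatisfiesEL (L : ℝ → ℝ → ℝ → ℝ) (x : ℝ → ℝ) : Prop :=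
  ∀ t : ℝ, deriv (fun s => pv L (x s) (deriv x s) s) t = px L (x t) (deriv x t) t

/-- Partial derivative of `f (x, t)` in the first argument. -/
noncomputable def pd1 (f : ℝ × ℝ → ℝ) (x t : ℝ) : ℝ := deriv (fun y => f (y, t)) x

/-- Partial derivative of `f (x, t)` in the second argument. -/
noncomputable def pd2 (f : ℝ × ℝ → ℝ) (x t : ℝ) : ℝ := deriv (fun s => f (x, s)) t

lemma aux_pd1 (f : ℝ × ℝ → ℝ) (hf : ContDiff ℝ 1 f) (X t : ℝ) :
    HasDerivAt (fun y => f (y, t)) (pd1 f X t) X := by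
  have hfd : HasFDerivAt f (fderiv ℝ f (X, t)) (X, t) :=
    (hf.differentiable one_ne_zero (X, t)).hasFDerivAt
  have hc : HasDerivAt (fun y : ℝ => (y, t)) ((1 : ℝ), (0 : ℝ)) X :=
    (hasDerivAt_id X).prodMk (hasDerivAt_const X t)
  have h := hfd.comp_hasDerivAt X hc
  have : pd1 f X t = fderiv ℝ f (X, t) (1, 0) := h.deriv
  rw [this]; exact h

lemma aux_pd2 (f : ℝ × ℝ → ℝ) (hf : ContDiff ℝ 1 f) (X t : ℝ) :
    HasDerivAt (fun s => f (X, s)) (pd2 f X t) t := by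
  have hfd : HasFDerivAt f (fderiv ℝ f (X, t)) (X, t) :=
    (hf.differentiable one_ne_zero (X, t)).hasFDerivAt
  have hc : HasDerivAt (fun s : ℝ => (X, s)) ((0 : ℝ), (1 : ℝ)) t :=
    (hasDerivAt_const t X).prodMk (hasDerivAt_id t)
  have h := hfd.comp_hasDerivAt t hc
  have : pd2 f X t = fderiv ℝ f (X, t) (0, 1) := h.deriv
  rw [this]; exact h

lemma aux_curve (f : ℝ × ℝ → ℝ) (hf : ContDiff ℝ 1 f) (x : ℝ → ℝ)
    (hx : Differentiable ℝ x) (s : ℝ) :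
    HasDerivAt (fun s => f (x s, s))
      (pd1 f (x s) s * deriv x s + pd2 f (x s) s) s := by
  have hfd : HasFDerivAt f (fderiv ℝ f (x s, s)) (x s, s) :=
    (hf.differentiable one_ne_zero (x s, s)).hasFDerivAt
  have hc : HasDerivAt (fun u : ℝ => (x u, u)) (deriv x s, (1 : ℝ)) s :=
    ((hx s).hasDerivAt).prodMk (hasDerivAt_id s)
  have h : HasDerivAt (fun u => f (x u, u)) (fderiv ℝ f (x s, s) (deriv x s, 1)) s :=
    HasFDerivAt.comp_hasDerivAt (f := fun u => (x u, u)) s hfd hc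
  have e1 : pd1 f (x s) s = fderiv ℝ f (x s, s) (1, 0) := by
    have hc1 : HasDerivAt (fun y : ℝ => (y, s)) ((1 : ℝ), (0 : ℝ)) (x s) :=
      (hasDerivAt_id (x s)).prodMk (hasDerivAt_const (x s) s)
    exact (hfd.comp_hasDerivAt (x s) hc1).deriv
  have e2 : pd2 f (x s) s = fderiv ℝ f (x s, s) (0, 1) := by
    have hc2 : HasDerivAt (fun u : ℝ => (x s, u)) ((0 : ℝ), (1 : ℝ)) s :=
      (hasDerivAt_const s (x s)).prodMk (hasDerivAt_id s)
    exact (hfd.comp_hasDerivAt s hc2).deriv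
  have key : fderiv ℝ f (x s, s) (deriv x s, 1)
      = pd1 f (x s) s * deriv x s + pd2 f (x s) s := by
    have : (deriv x s, (1 : ℝ)) = deriv x s • ((1 : ℝ), (0 : ℝ)) + ((0 : ℝ), (1 : ℝ)) := by
      simp [Prod.ext_iff]
    rw [this, map_add, map_smul, e1, e2]
    simp [mul_comm]
  rw [← key]; exact h


theorem standard_lagrangian_for_abc_equation
    (a b c : ℝ × ℝ → ℝ) (ha : Continuous a) (hb : Continuous b) (hc : Continuous c)
    (P : ℝ × ℝ → ℝ) (hP : ContDiff ℝ 1 P) (hPpos : ∀ x t : ℝ, 0 < P (x, t))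
    (hPx : ∀ x t : ℝ, pd1 P x t = 2 * a (x, t) * P (x, t))
    (hPt : ∀ x t : ℝ, pd2 P x t = b (x, t) * P (x, t))
    (Q : ℝ × ℝ → ℝ) (hQ : ContDiff ℝ 1 Q)
    (R : ℝ × ℝ → ℝ)
    (hR : ∀ x t : ℝ, HasDerivAt (fun y => R (y, t)) (pd2 Q x t - c (x, t) * P (x, t)) x)
    (L : ℝ → ℝ → ℝ → ℝ)
    (hL : ∀ x v t : ℝ, L x v t = (1/2) * P (x, t) * v ^ 2 + Q (x, t) * v + R (x, t))
    (x : ℝ → ℝ) (hx : Differentiable ℝ x) (hx' : Differentiable ℝ (deriv x)) :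
    SatisfiesEL L x ↔
      ∀ t : ℝ, deriv (deriv x) t + a (x t, t) * (deriv x t) ^ 2
        + b (x t, t) * deriv x t + c (x t, t) = 0 := by
  -- formula for pv
  have hpv : ∀ X v t : ℝ, pv L X v t = P (X, t) * v + Q (X, t) := by
    intro X v t
    have hfun : (fun w => L X w t)
        = fun w => (1/2) * P (X, t) * w ^ 2 + Q (X, t) * w + R (X, t) :=
      funext fun w => hL X w t
    rw [pv, hfun]
    have h1 := (hasDerivAt_pow 2 v).const_mul ((1/2) * P (X, t))
    have h2 := (hasDerivAt_id v).const_mul (Q (X, t))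
    have h := (h1.add h2).add_const (R (X, t))
    have h' : HasDerivAt (fun w : ℝ => (1/2) * P (X, t) * w ^ 2 + Q (X, t) * w + R (X, t))
        (P (X, t) * v + Q (X, t)) v := by
      exact h.congr_deriv (by push_cast; ring)
    exact h'.deriv
  -- formula for px
  have hpx : ∀ X v t : ℝ, px L X v t
      = (1/2) * pd1 P X t * v ^ 2 + pd1 Q X t * v + (pd2 Q X t - c (X, t) * P (X, t)) := by
    intro X v t
    have hfun : (fun y => L y v t)
        = fun y => (1/2) * P (y, t) * v ^ 2 + Q (y, t) * v + R (y, t) :=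
      funext fun y => hL y v t
    rw [px, hfun]
    have h1 := ((aux_pd1 P hP X t).const_mul ((1:ℝ)/2)).mul_const (v ^ 2)
    have h2 := (aux_pd1 Q hQ X t).mul_const v
    have h := (h1.add h2).add (hR X t)
    have h' : HasDerivAt (fun y => (1/2) * P (y, t) * v ^ 2 + Q (y, t) * v + R (y, t))
        ((1/2) * pd1 P X t * v ^ 2 + pd1 Q X t * v + (pd2 Q X t - c (X, t) * P (X, t))) X := by
      exact h.congr_deriv (by ring)
    exact h'.deriv
  -- derivative of the momentum along the curve
  have hmom : ∀ t : ℝ, deriv (fun s => pv L (x s) (deriv x s) s) t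
      = (pd1 P (x t) t * deriv x t + pd2 P (x t) t) * deriv x t
        + P (x t, t) * deriv (deriv x) t
        + (pd1 Q (x t) t * deriv x t + pd2 Q (x t) t) := by
    intro t
    have hfun : (fun s => pv L (x s) (deriv x s) s)
        = fun s => P (x s, s) * deriv x s + Q (x s, s) :=
      funext fun s => hpv (x s) (deriv x s) s
    rw [hfun]
    have h := ((aux_curve P hP x hx t).mul ((hx' t).hasDerivAt)).add (aux_curve Q hQ x hx t)
    exact h.deriv
  unfold SatisfiesEL
  constructor
  · intro hEL t
    have h := hEL t
    rw [hmom t, hpx] at h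
    rw [hPx, hPt] at h
    have hPne : P (x t, t) ≠ 0 := ne_of_gt (hPpos (x t) t)
    have hfact : P (x t, t) * (deriv (deriv x) t + a (x t, t) * (deriv x t) ^ 2
        + b (x t, t) * deriv x t + c (x t, t)) = 0 := by linarith [h, sq_nonneg (deriv x t)]
    rcases mul_eq_zero.mp hfact with h0 | h0
    · exact absurd h0 hPne
    · exact h0
  · intro hode t
    rw [hmom t, hpx, hPx, hPt]
    have h0 := hode t
    have : P (x t, t) * (deriv (deriv x) t + a (x t, t) * (deriv x t) ^ 2
        + b (x t, t) * deriv x t + c (x t, t)) = 0 := by rw [h0]; ring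
    nlinarith [this]
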